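/- Let d ≥ 1 and let s > -1/2 be a real number. Let U, V, Ũ, Ṽ be orthogonal d×d real matrices and let σ, σ̃ ∈ ℝ^d have nonnegative entries. Set A := U·diag(σ)·Vᵀ, C := Ũ·diag(σ̃)·Ṽᵀ, S_s(A) := U·diag(σ_1^{2s+1},…,σ_d^{2s+1})·Vᵀ and S_s(C) := Ũ·diag(σ̃_1^{2s+1},…,σ̃_d^{2s+1})·Ṽᵀ. Then (S_s(A) − S_s(C)) : (A − C) = (1/2) Σ_{i,j=1}^d [ (σ_j^{2s+1} − σ̃_i^{2s+1})(σ_j − σ̃_i)·( ((ŨᵀU)_{ij})² + ((ṼᵀV)_{ij})² ) + (σ_j^{2s+1} σ̃_i + σ_j σ̃_i^{2s+1})·( (ŨᵀU)_{ij} − (ṼᵀV)_{ij} )² ]. -/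
import Mathlib


open Matrix BigOperators

private lemma frob_trace {d : ℕ} (M N : Matrix (Fin d) (Fin d) ℝ) :
    ∑ i, ∑ j, M i j * N i j = (M * Nᵀ).trace := by
  simp [Matrix.trace, Matrix.mul_apply]

private lemma trace_diag_mul {d : ℕ} (a b : Fin d → ℝ) (M N : Matrix (Fin d) (Fin d) ℝ) :
    (Matrix.diagonal a * M * Matrix.diagonal b * N).trace
      = ∑ k, ∑ l, a k * M k l * b l * N l k := by
  simp [Matrix.trace, Matrix.mul_apply, Matrix.diagonal_apply, ite_mul,
    Finset.sum_ite_eq, Finset.sum_ite_eq', mul_assoc, Finset.mul_sum]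

private lemma swap_entry {d : ℕ} (X Z : Matrix (Fin d) (Fin d) ℝ) (k l : Fin d) :
    (Xᵀ * Z) k l = (Zᵀ * X) l k := by
  simp [Matrix.mul_apply, Matrix.transpose_apply, mul_comm]

private lemma key_cross {d : ℕ} (W X Y Z : Matrix (Fin d) (Fin d) ℝ) (a b : Fin d → ℝ) :
    ∑ i, ∑ j, (W * Matrix.diagonal a * Xᵀ) i j * (Y * Matrix.diagonal b * Zᵀ) i j
      = ∑ k, ∑ l, a k * (Xᵀ * Z) k l * b l * (Yᵀ * W) l k := by
  rw [frob_trace]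
  have ht : (Y * Matrix.diagonal b * Zᵀ)ᵀ = Z * Matrix.diagonal b * Yᵀ := by
    simp [Matrix.transpose_mul, Matrix.mul_assoc]
  rw [ht]
  have h1 : W * Matrix.diagonal a * Xᵀ * (Z * Matrix.diagonal b * Yᵀ)
      = W * (Matrix.diagonal a * (Xᵀ * Z) * Matrix.diagonal b * Yᵀ) := by
    simp only [Matrix.mul_assoc]
  rw [h1, Matrix.trace_mul_comm]
  have h2 : Matrix.diagonal a * (Xᵀ * Z) * Matrix.diagonal b * Yᵀ * W
      = Matrix.diagonal a * (Xᵀ * Z) * Matrix.diagonal b * (Yᵀ * W) := by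
    simp only [Matrix.mul_assoc]
  rw [h2, trace_diag_mul]

/-- The key algebraic identity for `(S_s(A) − S_s(C)) : (A − C)` in terms of
singular values and the orthogonal matrices of the singular value decompositions. -/
theorem key_identity_Ss
    (d : ℕ) (hd : 1 ≤ d) (s : ℝ) (hs : -1/2 < s)
    (U V U' V' : Matrix (Fin d) (Fin d) ℝ)
    (hU : Uᵀ * U = 1) (hV : Vᵀ * V = 1) (hU' : U'ᵀ * U' = 1) (hV' : V'ᵀ * V' = 1)
    (σ σ' : Fin d → ℝ) (hσ : ∀ j, 0 ≤ σ j) (hσ' : ∀ j, 0 ≤ σ' j)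
    (A C SsA SsC : Matrix (Fin d) (Fin d) ℝ)
    (hA : A = U * Matrix.diagonal σ * Vᵀ)
    (hC : C = U' * Matrix.diagonal σ' * V'ᵀ)
    (hSsA : SsA = U * Matrix.diagonal (fun j => σ j ^ (2*s+1)) * Vᵀ)
    (hSsC : SsC = U' * Matrix.diagonal (fun j => σ' j ^ (2*s+1)) * V'ᵀ) :
    ∑ i, ∑ j, (SsA - SsC) i j * (A - C) i j =
      (1/2) * ∑ i, ∑ j,
        ((σ j ^ (2*s+1) - σ' i ^ (2*s+1)) * (σ j - σ' i)
            * (((U'ᵀ * U) i j) ^ 2 + ((V'ᵀ * V) i j) ^ 2)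
          + (σ j ^ (2*s+1) * σ' i + σ j * σ' i ^ (2*s+1))
            * ((U'ᵀ * U) i j - (V'ᵀ * V) i j) ^ 2) := by
  set a : Fin d → ℝ := fun j => σ j ^ (2*s+1) with ha
  set a' : Fin d → ℝ := fun j => σ' j ^ (2*s+1) with ha'
  set P : Matrix (Fin d) (Fin d) ℝ := U'ᵀ * U with hP
  set Q : Matrix (Fin d) (Fin d) ℝ := V'ᵀ * V with hQ
  -- orthogonality consequences
  have hUU : U * Uᵀ = 1 := mul_eq_one_comm.mp hU
  have hU'U' : U' * U'ᵀ = 1 := mul_eq_one_comm.mp hU'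
  have hVV : V * Vᵀ = 1 := mul_eq_one_comm.mp hV
  have hV'V' : V' * V'ᵀ = 1 := mul_eq_one_comm.mp hV'
  have hPtP : Pᵀ * P = 1 := by
    rw [hP, Matrix.transpose_mul, Matrix.transpose_transpose, Matrix.mul_assoc,
      ← Matrix.mul_assoc U' U'ᵀ U, hU'U', Matrix.one_mul, hU]
  have hPPt : P * Pᵀ = 1 := by
    rw [hP, Matrix.transpose_mul, Matrix.transpose_transpose, Matrix.mul_assoc,
      ← Matrix.mul_assoc U Uᵀ U', hUU, Matrix.one_mul, hU']
  have hQtQ : Qᵀ * Q = 1 := by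
    rw [hQ, Matrix.transpose_mul, Matrix.transpose_transpose, Matrix.mul_assoc,
      ← Matrix.mul_assoc V' V'ᵀ V, hV'V', Matrix.one_mul, hV]
  have hQQt : Q * Qᵀ = 1 := by
    rw [hQ, Matrix.transpose_mul, Matrix.transpose_transpose, Matrix.mul_assoc,
      ← Matrix.mul_assoc V Vᵀ V', hVV, Matrix.one_mul, hV']
  have hPcol : ∀ j, ∑ i, P i j ^ 2 = 1 := by
    intro j
    have := congrArg (fun M => M j j) hPtP
    simpa [Matrix.mul_apply, Matrix.one_apply, sq] using this
  have hProw : ∀ i, ∑ j, P i j ^ 2 = 1 := by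
    intro i
    have := congrArg (fun M => M i i) hPPt
    simpa [Matrix.mul_apply, Matrix.one_apply, sq] using this
  have hQcol : ∀ j, ∑ i, Q i j ^ 2 = 1 := by
    intro j
    have := congrArg (fun M => M j j) hQtQ
    simpa [Matrix.mul_apply, Matrix.one_apply, sq] using this
  have hQrow : ∀ i, ∑ j, Q i j ^ 2 = 1 := by
    intro i
    have := congrArg (fun M => M i i) hQQt
    simpa [Matrix.mul_apply, Matrix.one_apply, sq] using this
  -- expand the left-hand side
  have expand : ∀ i j, (SsA - SsC) i j * (A - C) i j
      = SsA i j * A i j - SsA i j * C i j - SsC i j * A i j + SsC i j * C i j := by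
    intro i j
    simp only [Matrix.sub_apply]
    ring
  have hT1 : ∑ i, ∑ j, SsA i j * A i j = ∑ k, a k * σ k := by
    rw [hSsA, hA, key_cross, hV, hU]
    simp [Matrix.one_apply, ite_mul, mul_ite, Finset.sum_ite_eq, Finset.sum_ite_eq']
  have hT4 : ∑ i, ∑ j, SsC i j * C i j = ∑ k, a' k * σ' k := by
    rw [hSsC, hC, key_cross, hV', hU']
    simp [Matrix.one_apply, ite_mul, mul_ite, Finset.sum_ite_eq, Finset.sum_ite_eq']
  have hT2 : ∑ i, ∑ j, SsA i j * C i j = ∑ i, ∑ j, a j * Q i j * σ' i * P i j := by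
    rw [hSsA, hC, key_cross]
    rw [Finset.sum_comm]
    refine Finset.sum_congr rfl fun l _ => Finset.sum_congr rfl fun k _ => ?_
    rw [swap_entry V V' k l, ← hQ, ← hP]
  have hT3 : ∑ i, ∑ j, SsC i j * A i j = ∑ i, ∑ j, a' i * Q i j * σ j * P i j := by
    rw [hSsC, hA, key_cross]
    refine Finset.sum_congr rfl fun k _ => Finset.sum_congr rfl fun l _ => ?_
    rw [swap_entry U U' l k, ← hQ, ← hP]
  -- expand the right-hand side summand
  have hRHSterm : ∀ i j,
      (a j - a' i) * (σ j - σ' i) * (P i j ^ 2 + Q i j ^ 2)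
        + (a j * σ' i + σ j * a' i) * (P i j - Q i j) ^ 2
      = a j * σ j * P i j ^ 2 + a j * σ j * Q i j ^ 2
        + a' i * σ' i * P i j ^ 2 + a' i * σ' i * Q i j ^ 2
        - 2 * (a j * Q i j * σ' i * P i j) - 2 * (a' i * Q i j * σ j * P i j) := by
    intro i j
    ring
  calc ∑ i, ∑ j, (SsA - SsC) i j * (A - C) i j
      = ∑ k, a k * σ k - (∑ i, ∑ j, a j * Q i j * σ' i * P i j)
        - (∑ i, ∑ j, a' i * Q i j * σ j * P i j) + ∑ k, a' k * σ' k := by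
        simp only [expand, Finset.sum_add_distrib, Finset.sum_sub_distrib, hT1, hT2, hT3, hT4]
    _ = (1/2) * ∑ i, ∑ j,
        ((a j - a' i) * (σ j - σ' i) * (P i j ^ 2 + Q i j ^ 2)
          + (a j * σ' i + σ j * a' i) * (P i j - Q i j) ^ 2) := by
        simp only [hRHSterm, Finset.sum_add_distrib, Finset.sum_sub_distrib,
          ← Finset.mul_sum, ← Finset.sum_mul]
        have e1 : ∑ i, ∑ j, a j * σ j * P i j ^ 2 = ∑ k, a k * σ k := by
          rw [Finset.sum_comm]
          refine Finset.sum_congr rfl fun j _ => ?_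
          rw [← Finset.mul_sum, hPcol j, mul_one]
        have e2 : ∑ i, ∑ j, a j * σ j * Q i j ^ 2 = ∑ k, a k * σ k := by
          rw [Finset.sum_comm]
          refine Finset.sum_congr rfl fun j _ => ?_
          rw [← Finset.mul_sum, hQcol j, mul_one]
        have e3 : ∑ i, a' i * σ' i * ∑ j, P i j ^ 2 = ∑ k, a' k * σ' k := by
          refine Finset.sum_congr rfl fun i _ => ?_
          rw [hProw i, mul_one]
        have e4 : ∑ i, a' i * σ' i * ∑ j, Q i j ^ 2 = ∑ k, a' k * σ' k := by
          refine Finset.sum_congr rfl fun i _ => ?_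
          rw [hQrow i, mul_one]
        rw [e1, e2, e3, e4]
        ring
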